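/- Let A = (a_{i,j}) be a weight system (satisfying conditions (a) and (b)). Fix 1 ≤ i_1 < … < i_k ≤ n, and let p_1 < … < p_l be the elements of {1,…,k} \ {i_1,…,i_k} and q_1 > … > q_l the elements of {i_1,…,i_k} \ {1,…,k}. Then the minimum of Σ_m a_{x_m,y_m} over all sequences of pairs (x_1,y_1),…,(x_N,y_N) (with x_m < y_m) such that the corresponding product of root vectors f_{x_1,y_1}⋯f_{x_N,y_N} maps e_{1,…,k} to ±e_{i_1,…,i_k} in Λ^k ℂ^n equals a_{p_1,q_1} + … + a_{p_l,q_l}. -/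

import Mathlib

/-- The action of a product of root vectors `f_{x_1,y_1} ⋯ f_{x_N,y_N}` on the basis
of `Λ^k ℂ^n`, encoded on index sets: the rightmost factor acts first, `f_{x,y}`
replaces `x` by `y` in the set (and kills the vector if `x` is absent or `y` present).
`applySeq L S = some I` expresses that the product maps `e_S` to `± e_I`. -/
def applySeq : List (ℕ × ℕ) → Finset ℕ → Option (Finset ℕ)
  | [], S => some S
  | p :: rest, S => (applySeq rest S).bind fun S' =>
      if p.1 ∈ S' ∧ p.2 ∉ S' then some (insert p.2 (S'.erase p.1)) else none

/-- The canonical antichain matching: `p_1 < … < p_l` the elements of `{1,…,k} \ I`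
paired with `q_1 > … > q_l` the elements of `I \ {1,…,k}`. -/
def canonPairs (k : ℕ) (I : Finset ℕ) : List (ℕ × ℕ) :=
  ((Finset.Icc 1 k \ I).sort (· ≤ ·)).zip (((I \ Finset.Icc 1 k).sort (· ≤ ·)).reverse)

variable {n : ℕ} {a : ℕ → ℕ → ℤ}

lemma ac7_C1 (hb : ∀ i j, 1 ≤ i → i + 1 < j → j + 1 ≤ n →
      a i j + a (i+1) (j+1) ≥ a i (j+1) + a (i+1) j)
    {i j j' : ℕ} (h1 : 1 ≤ i) (h2 : i + 1 < j) (h3 : j ≤ j') (h4 : j' ≤ n) :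
    a i j + a (i+1) j' ≥ a i j' + a (i+1) j := by
  revert h4
  induction j', h3 using Nat.le_induction with
  | base => intro _; linarith
  | succ m hm ih =>
    intro h4
    have hbb := hb i m h1 (by omega) (by omega)
    have := ih (by omega)
    linarith

lemma ac7_C (hb : ∀ i j, 1 ≤ i → i + 1 < j → j + 1 ≤ n →
      a i j + a (i+1) (j+1) ≥ a i (j+1) + a (i+1) j)
    {i i' j j' : ℕ} (h1 : 1 ≤ i) (hii : i ≤ i') (hij : i' < j) (hjj : j ≤ j') (h4 : j' ≤ n) :
    a i j + a i' j' ≥ a i j' + a i' j := by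
  revert hij
  induction i', hii using Nat.le_induction with
  | base => intro _; linarith
  | succ m hm ih =>
    intro hij
    have h5 := ac7_C1 hb (i := m) (by omega) (by omega) hjj h4
    have h6 := ih (by omega)
    linarith

lemma ac7_TL (ha : ∀ i, 1 ≤ i → i + 2 ≤ n → a i (i+1) + a (i+1) (i+2) ≥ a i (i+2))
    (hb : ∀ i j, 1 ≤ i → i + 1 < j → j + 1 ≤ n →
      a i j + a (i+1) (j+1) ≥ a i (j+1) + a (i+1) j)
    {x z : ℕ} (h1 : 1 ≤ x) (h2 : x + 2 ≤ z) (h3 : z ≤ n) :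
    a x z ≤ a x (x+1) + a (x+1) z := by
  revert h3
  induction z, h2 using Nat.le_induction with
  | base => intro h3; have := ha x h1 h3; linarith
  | succ m hm ih =>
    intro h3
    have hbb := hb x m h1 (by omega) (by omega)
    have := ih (by omega)
    linarith

lemma ac7_T (ha : ∀ i, 1 ≤ i → i + 2 ≤ n → a i (i+1) + a (i+1) (i+2) ≥ a i (i+2))
    (hb : ∀ i j, 1 ≤ i → i + 1 < j → j + 1 ≤ n →
      a i j + a (i+1) (j+1) ≥ a i (j+1) + a (i+1) j) :
    ∀ (d x y z : ℕ), y = x + d + 1 → 1 ≤ x → y < z → z ≤ n → a x z ≤ a x y + a y z := by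
  intro d
  induction d with
  | zero =>
    intro x y z hy h1 h2 h3
    subst hy
    exact ac7_TL ha hb h1 (by omega) h3
  | succ m ih =>
    intro x y z hy h1 h2 h3
    have hC := ac7_C hb (i := x) (i' := x+1) (j := y) (j' := z) h1 (by omega) (by omega)
      (le_of_lt h2) h3
    have hT := ih (x+1) y z (by omega) (by omega) h2 h3
    linarith

lemma ac7_tri (ha : ∀ i, 1 ≤ i → i + 2 ≤ n → a i (i+1) + a (i+1) (i+2) ≥ a i (i+2))
    (hb : ∀ i j, 1 ≤ i → i + 1 < j → j + 1 ≤ n →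
      a i j + a (i+1) (j+1) ≥ a i (j+1) + a (i+1) j)
    {x y z : ℕ} (h1 : 1 ≤ x) (h2 : x < y) (h3 : y < z) (h4 : z ≤ n) :
    a x z ≤ a x y + a y z :=
  ac7_T ha hb (y - x - 1) x y z (by omega) h1 h3 h4


def ac7csum (a : ℕ → ℕ → ℤ) (E : List (ℕ × ℕ)) : ℤ := (E.map fun p => a p.1 p.2).sum

@[simp] lemma ac7csum_nil (a : ℕ → ℕ → ℤ) : ac7csum a [] = 0 := rfl
@[simp] lemma ac7csum_cons (a : ℕ → ℕ → ℤ) (p : ℕ × ℕ) (E : List (ℕ × ℕ)) :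
    ac7csum a (p :: E) = a p.1 p.2 + ac7csum a E := by simp [ac7csum]
@[simp] lemma ac7csum_append (a : ℕ → ℕ → ℤ) (E F : List (ℕ × ℕ)) :
    ac7csum a (E ++ F) = ac7csum a E + ac7csum a F := by simp [ac7csum]

lemma ac7_zms (l : List (ℕ × ℕ)) : (l.map Prod.fst).zip (l.map Prod.snd) = l := by
  induction l with
  | nil => rfl
  | cons p t ih => simp [ih]

lemma ac7_eq_of_perm_of_sorted {α : Type*} {r : α → α → Prop} [Std.Antisymm r] {l₁ l₂ : List α}
    (hp : l₁.Perm l₂) (h1 : l₁.Pairwise r) (h2 : l₂.Pairwise r) : l₁ = l₂ :=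
  List.Perm.eq_of_pairwise' h1 h2 hp

variable {n k : ℕ} {a : ℕ → ℕ → ℤ}

lemma ac7_OI (hb : ∀ i j, 1 ≤ i → i + 1 < j → j + 1 ≤ n →
      a i j + a (i+1) (j+1) ≥ a i (j+1) + a (i+1) j)
    (q : ℕ) (hq1 : k < q) (hq2 : q ≤ n) :
    ∀ (Qs : List ℕ) (p : ℕ) (P : List ℕ), (p :: P).Pairwise (· ≤ ·) →
      P.length = Qs.length →
      (∀ t ∈ p :: P, 1 ≤ t ∧ t ≤ k) → (∀ t ∈ Qs, k < t ∧ t ≤ n) →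
      ac7csum a ((p :: P).zip (Qs.orderedInsert (· ≥ ·) q)) ≤
        a p q + ac7csum a (P.zip Qs) := by
  intro Qs
  induction Qs with
  | nil =>
    intro p P _ hlen _ _
    have : P = [] := List.length_eq_zero_iff.mp hlen
    subst this
    simp [List.orderedInsert]
  | cons q₀ Qt ih =>
    intro p P hsort hlen hPk hQk
    by_cases h : q ≥ q₀
    · simp [List.orderedInsert, h]
    · cases P with
      | nil => simp at hlen
      | cons p₂ P₂ =>
        have hlt : q < q₀ := by omega
        have hq₀ := hQk q₀ (by simp)
        have hp₂ := hPk p₂ (by simp)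
        have hp := hPk p (by simp)
        have hpp₂ : p ≤ p₂ := (List.pairwise_cons.mp hsort).1 p₂ (by simp)
        have hih := ih p₂ P₂ (List.pairwise_cons.mp hsort).2 (by simpa using hlen)
          (fun t ht => hPk t (by simp at ht ⊢; tauto))
          (fun t ht => hQk t (by simp [ht]))
        have hC := ac7_C hb (i := p) (i' := p₂) (j := q) (j' := q₀) hp.1 hpp₂
          (by omega) (by omega) hq₀.2
        simp only [List.orderedInsert, if_neg h, List.zip_cons_cons, ac7csum_cons]
        linarith

lemma ac7_Zmin (hb : ∀ i j, 1 ≤ i → i + 1 < j → j + 1 ≤ n →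
      a i j + a (i+1) (j+1) ≥ a i (j+1) + a (i+1) j) :
    ∀ (Q P : List ℕ), P.Pairwise (· ≤ ·) → P.length = Q.length →
      (∀ t ∈ P, 1 ≤ t ∧ t ≤ k) → (∀ t ∈ Q, k < t ∧ t ≤ n) →
      ac7csum a (P.zip (Q.insertionSort (· ≥ ·))) ≤ ac7csum a (P.zip Q) := by
  intro Q
  induction Q with
  | nil => intro P _ _ _ _; simp [List.insertionSort]
  | cons q Q₀ ih =>
    intro P hsort hlen hPk hQk
    cases P with
    | nil => simp at hlen
    | cons p P₀ =>
      have hq := hQk q (by simp)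
      have hperm : (Q₀.insertionSort (· ≥ ·)).Perm Q₀ := List.perm_insertionSort _ _
      have hOI := ac7_OI hb q hq.1 hq.2 (Q₀.insertionSort (· ≥ ·)) p P₀ hsort
        (by simpa [hperm.length_eq] using hlen)
        hPk (fun t ht => hQk t (by simp [hperm.mem_iff.mp ht]))
      have hih := ih P₀ (List.pairwise_cons.mp hsort).2 (by simpa using hlen)
        (fun t ht => hPk t (by simp [ht])) (fun t ht => hQk t (by simp [ht]))
      simp only [List.insertionSort_cons]
      simp only [List.zip_cons_cons, ac7csum_cons]
      linarith

lemma ac7_ML (hb : ∀ i j, 1 ≤ i → i + 1 < j → j + 1 ≤ n →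
      a i j + a (i+1) (j+1) ≥ a i (j+1) + a (i+1) j)
    (P Q : List ℕ) (hP : P.Pairwise (· ≤ ·)) (hQ : Q.Pairwise (· ≥ ·))
    (hlen : P.length = Q.length)
    (hPk : ∀ t ∈ P, 1 ≤ t ∧ t ≤ k) (hQk : ∀ t ∈ Q, k < t ∧ t ≤ n)
    (E : List (ℕ × ℕ)) (hfst : (E.map Prod.fst).Perm P) (hsnd : (E.map Prod.snd).Perm Q) :
    ac7csum a (P.zip Q) ≤ ac7csum a E := by
  classical
  haveI : IsTotal ℕ (· ≥ ·) := ⟨fun u v => le_total v u⟩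
  haveI : IsTrans ℕ (· ≥ ·) := ⟨fun u v w h1 h2 => le_trans h2 h1⟩
  haveI : IsAntisymm ℕ (· ≥ ·) := ⟨fun u v h1 h2 => le_antisymm h2 h1⟩
  set r : ℕ × ℕ → ℕ × ℕ → Prop := fun u v => u.1 ≤ v.1 with hr
  haveI : DecidableRel r := fun u v => inferInstanceAs (Decidable (u.1 ≤ v.1))
  haveI : IsTotal (ℕ × ℕ) r := ⟨fun u v => le_total u.1 v.1⟩
  haveI : IsTrans (ℕ × ℕ) r := ⟨fun u v w h1 h2 => le_trans h1 h2⟩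
  set E' := E.insertionSort r with hE'
  have hperm : E'.Perm E := List.perm_insertionSort r E
  have hsum : ac7csum a E' = ac7csum a E := List.Perm.sum_eq (hperm.map _)
  have hfst' : E'.map Prod.fst = P := by
    apply ac7_eq_of_perm_of_sorted ((hperm.map _).trans hfst) ?_ hP
    exact List.Pairwise.map _ (fun {u v} h => h) (List.pairwise_insertionSort r E)
  have hQ1 : (E'.map Prod.snd).Perm Q := (hperm.map _).trans hsnd
  have hzip : P.zip (E'.map Prod.snd) = E' := by rw [← hfst']; exact ac7_zms E'
  have hsortQ : (E'.map Prod.snd).insertionSort (· ≥ ·) = Q :=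
    ac7_eq_of_perm_of_sorted ((List.perm_insertionSort _ _).trans hQ1)
      (List.pairwise_insertionSort _ _) hQ
  have hZ := ac7_Zmin (k := k) hb (E'.map Prod.snd) P hP
    (by rw [hQ1.length_eq, hlen]) hPk (fun t ht => hQk t (hQ1.mem_iff.mp ht))
  rw [hsortQ, hzip] at hZ
  linarith

lemma ac7_sort_min_cons (A : Finset ℕ) (hA : A.Nonempty) :
    A.sort (· ≤ ·) = A.min' hA :: ((A.erase (A.min' hA)).sort (· ≤ ·)) := by
  apply ac7_eq_of_perm_of_sorted ?_ (Finset.pairwise_sort _ _) ?_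
  · rw [← Multiset.coe_eq_coe]
    show ((A.sort (· ≤ ·) : List ℕ) : Multiset ℕ) =
      ((A.min' hA :: (A.erase (A.min' hA)).sort (· ≤ ·) : List ℕ) : Multiset ℕ)
    rw [Finset.sort_eq]
    rw [show ((A.min' hA :: (A.erase (A.min' hA)).sort (· ≤ ·) : List ℕ) : Multiset ℕ) =
      A.min' hA ::ₘ ((A.erase (A.min' hA)).sort (· ≤ ·) : List ℕ) from rfl]
    rw [Finset.sort_eq, Finset.erase_val]
    exact (Multiset.cons_erase (by exact_mod_cast A.min'_mem hA)).symm
  · rw [List.pairwise_cons]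
    exact ⟨fun b hb => A.min'_le b (Finset.mem_of_mem_erase ((Finset.mem_sort _).1 hb)),
      Finset.pairwise_sort _ _⟩

lemma ac7_sort_max_rev (B : Finset ℕ) (hB : B.Nonempty) :
    (B.sort (· ≤ ·)).reverse =
      B.max' hB :: ((B.erase (B.max' hB)).sort (· ≤ ·)).reverse := by
  haveI : IsAntisymm ℕ (· ≥ ·) := ⟨fun u v h1 h2 => le_antisymm h2 h1⟩
  apply ac7_eq_of_perm_of_sorted (r := fun x y : ℕ => x ≥ y) ?_ ?_ ?_
  · rw [← Multiset.coe_eq_coe]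
    show (((B.sort (· ≤ ·)).reverse : List ℕ) : Multiset ℕ) =
      B.max' hB ::ₘ (((B.erase (B.max' hB)).sort (· ≤ ·)).reverse : List ℕ)
    rw [Multiset.coe_reverse, Multiset.coe_reverse, Finset.sort_eq, Finset.sort_eq,
      Finset.erase_val]
    exact (Multiset.cons_erase (by exact_mod_cast B.max'_mem hB)).symm
  · exact List.pairwise_reverse.mpr (by exact Finset.pairwise_sort _ (· ≤ ·))
  · rw [List.pairwise_cons]
    refine ⟨fun b hb => B.le_max' b ?_, ?_⟩
    · exact Finset.mem_of_mem_erase ((Finset.mem_sort _).1 (List.mem_reverse.1 hb))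
    · exact List.pairwise_reverse.mpr (by exact Finset.pairwise_sort _ (· ≤ ·))


lemma ac7_cardAB {k : ℕ} (S : Finset ℕ) (hcard : S.card = k) :
    (Finset.Icc 1 k \ S).card = (S \ Finset.Icc 1 k).card := by
  have h1 := Finset.card_sdiff_add_card_inter (Finset.Icc 1 k) S
  have h2 := Finset.card_sdiff_add_card_inter S (Finset.Icc 1 k)
  rw [Finset.inter_comm] at h2
  have h3 : (Finset.Icc 1 k).card = k := by simp
  omega

lemma ac7_sdiff_ins₁ {k : ℕ} (S : Finset ℕ) {p q : ℕ}
    (hp : p ∈ Finset.Icc 1 k \ S) (hq : q ∈ S \ Finset.Icc 1 k) :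
    Finset.Icc 1 k \ (insert p (S.erase q)) = (Finset.Icc 1 k \ S).erase p := by
  obtain ⟨hp1, hp2⟩ := Finset.mem_sdiff.mp hp
  obtain ⟨hq1, hq2⟩ := Finset.mem_sdiff.mp hq
  ext z
  simp only [Finset.mem_sdiff, Finset.mem_insert, Finset.mem_erase]
  constructor
  · rintro ⟨hzk, hz⟩
    push_neg at hz
    obtain ⟨hzp, hz2⟩ := hz
    refine ⟨hzp, hzk, fun hzS => ?_⟩
    rcases eq_or_ne z q with rfl | hzq
    · exact hq2 hzk
    · exact hz2 hzq hzS
  · rintro ⟨hzp, hzk, hzS⟩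
    refine ⟨hzk, ?_⟩
    push_neg
    exact ⟨hzp, fun _ => hzS⟩

lemma ac7_sdiff_ins₂ {k : ℕ} (S : Finset ℕ) {p q : ℕ}
    (hp : p ∈ Finset.Icc 1 k \ S) (hq : q ∈ S \ Finset.Icc 1 k) :
    (insert p (S.erase q)) \ Finset.Icc 1 k = (S \ Finset.Icc 1 k).erase q := by
  obtain ⟨hp1, hp2⟩ := Finset.mem_sdiff.mp hp
  obtain ⟨hq1, hq2⟩ := Finset.mem_sdiff.mp hq
  ext z
  simp only [Finset.mem_sdiff, Finset.mem_insert, Finset.mem_erase]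
  constructor
  · rintro ⟨hz, hzk⟩
    rcases hz with rfl | ⟨hzq, hzS⟩
    · exact absurd hp1 hzk
    · exact ⟨hzq, hzS, hzk⟩
  · rintro ⟨hzq, hzS, hzk⟩
    exact ⟨Or.inr ⟨hzq, hzS⟩, hzk⟩

lemma ac7_canon_cons {k : ℕ} (S : Finset ℕ) (hA : (Finset.Icc 1 k \ S).Nonempty)
    (hB : (S \ Finset.Icc 1 k).Nonempty) :
    canonPairs k S = ((Finset.Icc 1 k \ S).min' hA, (S \ Finset.Icc 1 k).max' hB) ::
      canonPairs k (insert ((Finset.Icc 1 k \ S).min' hA)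
        (S.erase ((S \ Finset.Icc 1 k).max' hB))) := by
  have hp : (Finset.Icc 1 k \ S).min' hA ∈ Finset.Icc 1 k \ S := Finset.min'_mem _ _
  have hq : (S \ Finset.Icc 1 k).max' hB ∈ S \ Finset.Icc 1 k := Finset.max'_mem _ _
  unfold canonPairs
  rw [ac7_sdiff_ins₁ S hp hq, ac7_sdiff_ins₂ S hp hq,
    ac7_sort_min_cons _ hA, ac7_sort_max_rev _ hB]
  rfl

lemma ac7_canon_applySeq {n k : ℕ} (hkn : k ≤ n) :
    ∀ (m : ℕ) (S : Finset ℕ), (Finset.Icc 1 k \ S).card = m → S ⊆ Finset.Icc 1 n →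
      S.card = k → applySeq (canonPairs k S) (Finset.Icc 1 k) = some S := by
  intro m
  induction m with
  | zero =>
    intro S hm hS hcard
    have hsub : Finset.Icc 1 k ⊆ S := by
      rw [← Finset.sdiff_eq_empty_iff_subset]
      exact Finset.card_eq_zero.mp hm
    have hSeq : S = Finset.Icc 1 k := by
      apply (Finset.eq_of_subset_of_card_le hsub ?_).symm
      simp [hcard]
    rw [hSeq]
    have h0 : canonPairs k (Finset.Icc 1 k) = [] := by
      unfold canonPairs
      rw [Finset.sdiff_self, Finset.sort_empty]
      rfl
    rw [h0]
    rfl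
  | succ m ih =>
    intro S hm hS hcard
    have hA : (Finset.Icc 1 k \ S).Nonempty := Finset.card_pos.mp (by omega)
    have hB : (S \ Finset.Icc 1 k).Nonempty := by
      apply Finset.card_pos.mp
      rw [← ac7_cardAB S hcard]; omega
    set p := (Finset.Icc 1 k \ S).min' hA with hpdef
    set q := (S \ Finset.Icc 1 k).max' hB with hqdef
    have hp : p ∈ Finset.Icc 1 k \ S := Finset.min'_mem _ _
    have hq : q ∈ S \ Finset.Icc 1 k := Finset.max'_mem _ _
    obtain ⟨hp1, hp2⟩ := Finset.mem_sdiff.mp hp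
    obtain ⟨hq1, hq2⟩ := Finset.mem_sdiff.mp hq
    set S₀ := insert p (S.erase q) with hS₀
    have hpq : p ≠ q := fun h => hq2 (h ▸ hp1)
    have hScard : S₀.card = k := by
      rw [hS₀, Finset.card_insert_of_notMem (fun h => hp2 (Finset.mem_of_mem_erase h)),
        Finset.card_erase_of_mem hq1, hcard]
      have : 1 ≤ k := by
        by_contra h
        have : k = 0 := by omega
        subst this
        simp [Finset.card_eq_zero] at hcard
        subst hcard
        simp at hq1
      omega
    have hSsub : S₀ ⊆ Finset.Icc 1 n := by
      intro z hz
      rcases Finset.mem_insert.mp hz with rfl | hz2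
      · exact Finset.Icc_subset_Icc (le_refl _) hkn hp1
      · exact hS (Finset.mem_of_mem_erase hz2)
    have hAcard : (Finset.Icc 1 k \ S₀).card = m := by
      rw [hS₀, ac7_sdiff_ins₁ S hp hq, Finset.card_erase_of_mem hp]
      omega
    rw [ac7_canon_cons S hA hB, ← hpdef, ← hqdef, ← hS₀]
    show ((applySeq (canonPairs k S₀) (Finset.Icc 1 k)).bind fun S' =>
      if p ∈ S' ∧ q ∉ S' then some (insert q (S'.erase p)) else none) = some S
    rw [ih S₀ hAcard hSsub hScard]
    have hcond : p ∈ S₀ ∧ q ∉ S₀ := by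
      refine ⟨Finset.mem_insert_self _ _, fun h => ?_⟩
      rcases Finset.mem_insert.mp h with h | h
      · exact hpq h.symm
      · exact (Finset.notMem_erase q S) h
    rw [Option.bind_some, if_pos hcond]
    congr 1
    rw [hS₀, Finset.erase_insert (fun h => hp2 (Finset.mem_of_mem_erase h)),
      Finset.insert_erase hq1]

lemma ac7_memB {n k : ℕ} {S : Finset ℕ} (hS : S ⊆ Finset.Icc 1 n) {t : ℕ}
    (ht : t ∈ S \ Finset.Icc 1 k) : k < t ∧ t ≤ n := by
  obtain ⟨h1, h2⟩ := Finset.mem_sdiff.mp ht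
  have h3 := Finset.mem_Icc.mp (hS h1)
  rw [Finset.mem_Icc] at h2
  omega

lemma ac7_step {n k : ℕ} {a : ℕ → ℕ → ℤ}
    (ha : ∀ i, 1 ≤ i → i + 2 ≤ n → a i (i+1) + a (i+1) (i+2) ≥ a i (i+2))
    (hb : ∀ i j, 1 ≤ i → i + 1 < j → j + 1 ≤ n →
      a i j + a (i+1) (j+1) ≥ a i (j+1) + a (i+1) j)
    (S : Finset ℕ) (hS : S ⊆ Finset.Icc 1 n) (hcard : S.card = k)
    {x y : ℕ} (hx : x ∈ S) (hy : y ∉ S) (h1x : 1 ≤ x) (hxy : x < y) (hyn : y ≤ n) :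
    ac7csum a (canonPairs k (insert y (S.erase x))) ≤ ac7csum a (canonPairs k S) + a x y := by
  classical
  set S' := insert y (S.erase x) with hS'def
  have hS'sub : S' ⊆ Finset.Icc 1 n := by
    intro z hz
    rcases Finset.mem_insert.mp hz with rfl | hz2
    · rw [Finset.mem_Icc]; omega
    · exact hS (Finset.mem_of_mem_erase hz2)
  have hk1 : 1 ≤ k := by
    by_contra h
    have hk0 : k = 0 := by omega
    rw [hk0, Finset.card_eq_zero] at hcard
    rw [hcard] at hx
    simp at hx
  have hS'card : S'.card = k := by
    rw [hS'def, Finset.card_insert_of_notMem (fun h => hy (Finset.mem_of_mem_erase h)),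
      Finset.card_erase_of_mem hx, hcard]
    omega
  -- abbreviations
  set A := Finset.Icc 1 k \ S with hAdef
  set B := S \ Finset.Icc 1 k with hBdef
  set A' := Finset.Icc 1 k \ S' with hA'def
  set B' := S' \ Finset.Icc 1 k with hB'def
  have hlen : (A.sort (· ≤ ·)).length = ((B.sort (· ≤ ·)).reverse).length := by
    rw [List.length_reverse, Finset.length_sort, Finset.length_sort]
    exact ac7_cardAB S hcard
  have hlen' : (A'.sort (· ≤ ·)).length = ((B'.sort (· ≤ ·)).reverse).length := by
    rw [List.length_reverse, Finset.length_sort, Finset.length_sort]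
    exact ac7_cardAB S' hS'card
  have hfstCZ : (canonPairs k S).map Prod.fst = A.sort (· ≤ ·) :=
    List.map_fst_zip (le_of_eq hlen)
  have hsndCZ : (canonPairs k S).map Prod.snd = (B.sort (· ≤ ·)).reverse :=
    List.map_snd_zip (ge_of_eq hlen)
  have hML : ∀ E : List (ℕ × ℕ), ((E.map Prod.fst).Perm (A'.sort (· ≤ ·))) →
      ((E.map Prod.snd).Perm ((B'.sort (· ≤ ·)).reverse)) →
      ac7csum a (canonPairs k S') ≤ ac7csum a E := by
    intro E h1 h2
    refine ac7_ML (k := k) hb _ _ (Finset.pairwise_sort _ _)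
      (List.pairwise_reverse.mpr (by exact Finset.pairwise_sort _ (· ≤ ·))) hlen' ?_ ?_ E h1 h2
    · intro t ht
      have := Finset.mem_sdiff.mp ((Finset.mem_sort _).1 ht)
      rw [Finset.mem_Icc] at this
      exact this.1
    · intro t ht
      exact ac7_memB hS'sub ((Finset.mem_sort _).1 (List.mem_reverse.1 ht))
  by_cases hyk : y ≤ k
  · -- Case 1 : x < y ≤ k
    have hxk : x ≤ k := by omega
    have hA' : A' = insert x (A.erase y) := by
      rw [hA'def, hAdef, hS'def]
      ext z
      simp only [Finset.mem_sdiff, Finset.mem_insert, Finset.mem_erase, Finset.mem_Icc]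
      constructor
      · rintro ⟨hzk, hz⟩
        push_neg at hz
        obtain ⟨hzy, hz2⟩ := hz
        rcases eq_or_ne z x with rfl | hzx
        · exact Or.inl rfl
        · exact Or.inr ⟨hzy, hzk, hz2 hzx⟩
      · rintro (rfl | ⟨hzy, hzk, hzS⟩)
        · refine ⟨⟨h1x, by omega⟩, ?_⟩
          push_neg
          exact ⟨by omega, fun h => absurd rfl h⟩
        · refine ⟨hzk, ?_⟩
          push_neg
          exact ⟨hzy, fun _ => hzS⟩
    have hB'eq : B' = B := by
      rw [hB'def, hBdef, hS'def]
      ext z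
      simp only [Finset.mem_sdiff, Finset.mem_insert, Finset.mem_erase, Finset.mem_Icc]
      constructor
      · rintro ⟨hz, hzk⟩
        rcases hz with rfl | ⟨hzx, hzS⟩
        · exact absurd ⟨by omega, hyk⟩ hzk
        · exact ⟨hzS, hzk⟩
      · rintro ⟨hzS, hzk⟩
        refine ⟨Or.inr ⟨?_, hzS⟩, hzk⟩
        intro h; subst h; exact hzk ⟨h1x, hxk⟩
    have hxA : x ∉ A := by rw [hAdef]; simp [hx]
    have hyA : y ∈ A := by
      rw [hAdef]
      simp only [Finset.mem_sdiff, Finset.mem_Icc]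
      exact ⟨⟨by omega, hyk⟩, hy⟩
    have hyfst : y ∈ (canonPairs k S).map Prod.fst := by
      rw [hfstCZ, Finset.mem_sort]; exact hyA
    obtain ⟨pq, hpqmem, hpq1⟩ := List.mem_map.mp hyfst
    obtain ⟨y', q'⟩ := pq
    simp only at hpq1
    subst hpq1
    obtain ⟨E₁, E₂, hsplit⟩ := List.append_of_mem hpqmem
    have hpqmem' : (y', q') ∈ (A.sort (· ≤ ·)).zip ((B.sort (· ≤ ·)).reverse) := hpqmem
    have hq'B : q' ∈ B := (Finset.mem_sort _).1 (List.mem_reverse.1 (List.of_mem_zip hpqmem').2)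
    have hq' : k < q' ∧ q' ≤ n := ac7_memB hS (hBdef ▸ hq'B)
    have htri : a x q' ≤ a x y' + a y' q' := ac7_tri ha hb h1x hxy (by omega) hq'.2
    have hE := hML (E₁ ++ (x, q') :: E₂) ?_ ?_
    · rw [hsplit]
      simp only [ac7csum_append, ac7csum_cons] at hE ⊢
      linarith
    · -- fst permutation
      rw [← Multiset.coe_eq_coe]
      have hAval : A.val = y' ::ₘ ((E₁.map Prod.fst : Multiset ℕ) + (E₂.map Prod.fst : Multiset ℕ)) := by
        rw [← Finset.sort_eq A (· ≤ ·), ← hfstCZ, hsplit]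
        simp only [List.map_append, List.map_cons]
        rw [show ((E₁.map Prod.fst ++ y' :: E₂.map Prod.fst : List ℕ) : Multiset ℕ) =
          (E₁.map Prod.fst : Multiset ℕ) + ((y' :: E₂.map Prod.fst : List ℕ) : Multiset ℕ) from rfl]
        rw [show ((y' :: E₂.map Prod.fst : List ℕ) : Multiset ℕ) =
          y' ::ₘ (E₂.map Prod.fst : Multiset ℕ) from rfl]
        rw [Multiset.add_cons]
      have hxAe : x ∉ A.erase y' := fun h => hxA (Finset.mem_of_mem_erase h)
      show ((((E₁ ++ (x, q') :: E₂).map Prod.fst : List ℕ)) : Multiset ℕ) =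
        ((A'.sort (· ≤ ·) : List ℕ) : Multiset ℕ)
      rw [Finset.sort_eq, hA', Finset.insert_val_of_notMem hxAe, Finset.erase_val, hAval,
        Multiset.erase_cons_head]
      simp only [List.map_append, List.map_cons]
      rw [show (((E₁.map Prod.fst) ++ x :: (E₂.map Prod.fst) : List ℕ) : Multiset ℕ) =
        (E₁.map Prod.fst : Multiset ℕ) + (x ::ₘ (E₂.map Prod.fst : Multiset ℕ)) from rfl]
      rw [Multiset.add_cons]
    · -- snd permutation
      have hsnd : (E₁ ++ (x, q') :: E₂).map Prod.snd = (canonPairs k S).map Prod.snd := by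
        rw [hsplit]; simp
      rw [hsnd, hsndCZ, ← hB'eq]
  · by_cases hxk : x ≤ k
    · -- Case 2 : x ≤ k < y
      have hA' : A' = insert x A := by
        rw [hA'def, hAdef, hS'def]
        ext z
        simp only [Finset.mem_sdiff, Finset.mem_insert, Finset.mem_erase, Finset.mem_Icc]
        constructor
        · rintro ⟨hzk, hz⟩
          push_neg at hz
          obtain ⟨hzy, hz2⟩ := hz
          rcases eq_or_ne z x with rfl | hzx
          · exact Or.inl rfl
          · exact Or.inr ⟨hzk, hz2 hzx⟩
        · rintro (rfl | ⟨hzk, hzS⟩)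
          · refine ⟨⟨h1x, hxk⟩, ?_⟩
            push_neg
            exact ⟨by omega, fun h => absurd rfl h⟩
          · refine ⟨hzk, ?_⟩
            push_neg
            exact ⟨by omega, fun _ => hzS⟩
      have hB' : B' = insert y B := by
        rw [hB'def, hBdef, hS'def]
        ext z
        simp only [Finset.mem_sdiff, Finset.mem_insert, Finset.mem_erase, Finset.mem_Icc]
        constructor
        · rintro ⟨hz, hzk⟩
          rcases hz with rfl | ⟨hzx, hzS⟩
          · exact Or.inl rfl
          · exact Or.inr ⟨hzS, hzk⟩
        · rintro (rfl | ⟨hzS, hzk⟩)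
          · exact ⟨Or.inl rfl, by omega⟩
          · refine ⟨Or.inr ⟨by intro h; subst h; exact hzk ⟨h1x, hxk⟩, hzS⟩, hzk⟩
      have hxA : x ∉ A := by rw [hAdef]; simp [hx]
      have hyB : y ∉ B := by rw [hBdef]; simp [hy]
      have hE := hML ((x, y) :: canonPairs k S) ?_ ?_
      · simp only [ac7csum_cons] at hE; linarith
      · rw [← Multiset.coe_eq_coe]
        show (x ::ₘ ((canonPairs k S).map Prod.fst : Multiset ℕ)) = _
        rw [hfstCZ]
        rw [show ((A.sort (· ≤ ·) : List ℕ) : Multiset ℕ) = A.val from Finset.sort_eq _ _,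
          show ((A'.sort (· ≤ ·) : List ℕ) : Multiset ℕ) = A'.val from Finset.sort_eq _ _,
          hA', Finset.insert_val_of_notMem hxA]
      · rw [← Multiset.coe_eq_coe]
        show (y ::ₘ ((canonPairs k S).map Prod.snd : Multiset ℕ)) = _
        rw [hsndCZ, Multiset.coe_reverse, Multiset.coe_reverse]
        rw [show ((B.sort (· ≤ ·) : List ℕ) : Multiset ℕ) = B.val from Finset.sort_eq _ _,
          show ((B'.sort (· ≤ ·) : List ℕ) : Multiset ℕ) = B'.val from Finset.sort_eq _ _,
          hB', Finset.insert_val_of_notMem hyB]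
    · -- Case 3 : k < x < y
      have hkx : k < x := by omega
      have hA'eq : A' = A := by
        rw [hA'def, hAdef, hS'def]
        ext z
        simp only [Finset.mem_sdiff, Finset.mem_insert, Finset.mem_erase, Finset.mem_Icc]
        constructor
        · rintro ⟨hzk, hz⟩
          push_neg at hz
          obtain ⟨hzy, hz2⟩ := hz
          refine ⟨hzk, ?_⟩
          rcases eq_or_ne z x with rfl | hzx
          · omega
          · exact hz2 hzx
        · rintro ⟨hzk, hzS⟩
          refine ⟨hzk, ?_⟩
          push_neg
          exact ⟨by omega, fun _ => hzS⟩
      have hB' : B' = insert y (B.erase x) := by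
        rw [hB'def, hBdef, hS'def]
        ext z
        simp only [Finset.mem_sdiff, Finset.mem_insert, Finset.mem_erase, Finset.mem_Icc]
        constructor
        · rintro ⟨hz, hzk⟩
          rcases hz with rfl | ⟨hzx, hzS⟩
          · exact Or.inl rfl
          · exact Or.inr ⟨hzx, hzS, hzk⟩
        · rintro (rfl | ⟨hzx, hzS, hzk⟩)
          · exact ⟨Or.inl rfl, by omega⟩
          · exact ⟨Or.inr ⟨hzx, hzS⟩, hzk⟩
      have hxB : x ∈ B := by
        rw [hBdef]
        simp only [Finset.mem_sdiff, Finset.mem_Icc]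
        exact ⟨hx, by omega⟩
      have hyBe : y ∉ B.erase x := by
        intro h
        have := Finset.mem_of_mem_erase h
        rw [hBdef] at this
        exact hy (Finset.mem_sdiff.mp this).1
      have hxsnd : x ∈ (canonPairs k S).map Prod.snd := by
        rw [hsndCZ, List.mem_reverse, Finset.mem_sort]; exact hxB
      obtain ⟨pq, hpqmem, hpq2⟩ := List.mem_map.mp hxsnd
      obtain ⟨p', x'⟩ := pq
      simp only at hpq2
      subst hpq2
      obtain ⟨E₁, E₂, hsplit⟩ := List.append_of_mem hpqmem
      have hpqmem' : (p', x') ∈ (A.sort (· ≤ ·)).zip ((B.sort (· ≤ ·)).reverse) := hpqmem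
      have hp'A : p' ∈ A := (Finset.mem_sort _).1 (List.of_mem_zip hpqmem').1
      have hp' : 1 ≤ p' ∧ p' ≤ k := by
        have := Finset.mem_sdiff.mp (hAdef ▸ hp'A)
        rw [Finset.mem_Icc] at this
        exact this.1
      have htri : a p' y ≤ a p' x' + a x' y := ac7_tri ha hb hp'.1 (by omega) hxy hyn
      have hE := hML (E₁ ++ (p', y) :: E₂) ?_ ?_
      · rw [hsplit]
        simp only [ac7csum_append, ac7csum_cons] at hE ⊢
        linarith
      · -- fst permutation
        have hfst : (E₁ ++ (p', y) :: E₂).map Prod.fst = (canonPairs k S).map Prod.fst := by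
          rw [hsplit]; simp
        rw [hfst, hfstCZ, ← hA'eq]
      · -- snd permutation
        rw [← Multiset.coe_eq_coe]
        have hBval : B.val = x' ::ₘ ((E₁.map Prod.snd : Multiset ℕ) + (E₂.map Prod.snd : Multiset ℕ)) := by
          rw [← Finset.sort_eq B (· ≤ ·), ← Multiset.coe_reverse, ← hsndCZ, hsplit]
          simp only [List.map_append, List.map_cons]
          rw [show ((E₁.map Prod.snd ++ x' :: E₂.map Prod.snd : List ℕ) : Multiset ℕ) =
            (E₁.map Prod.snd : Multiset ℕ) + ((x' :: E₂.map Prod.snd : List ℕ) : Multiset ℕ) from rfl]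
          rw [show ((x' :: E₂.map Prod.snd : List ℕ) : Multiset ℕ) =
            x' ::ₘ (E₂.map Prod.snd : Multiset ℕ) from rfl]
          rw [Multiset.add_cons]
        show ((((E₁ ++ (p', y) :: E₂).map Prod.snd : List ℕ)) : Multiset ℕ) =
          (((B'.sort (· ≤ ·)).reverse : List ℕ) : Multiset ℕ)
        rw [Multiset.coe_reverse, Finset.sort_eq, hB', Finset.insert_val_of_notMem hyBe,
          Finset.erase_val, hBval, Multiset.erase_cons_head]
        simp only [List.map_append, List.map_cons]
        rw [show (((E₁.map Prod.snd) ++ y :: (E₂.map Prod.snd) : List ℕ) : Multiset ℕ) =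
          (E₁.map Prod.snd : Multiset ℕ) + (y ::ₘ (E₂.map Prod.snd : Multiset ℕ)) from rfl]
        rw [Multiset.add_cons]

lemma ac7_lb {n k : ℕ} {a : ℕ → ℕ → ℤ}
    (ha : ∀ i, 1 ≤ i → i + 2 ≤ n → a i (i+1) + a (i+1) (i+2) ≥ a i (i+2))
    (hb : ∀ i j, 1 ≤ i → i + 1 < j → j + 1 ≤ n →
      a i j + a (i+1) (j+1) ≥ a i (j+1) + a (i+1) j)
    (hkn : k ≤ n) :
    ∀ (L : List (ℕ × ℕ)) (S' : Finset ℕ),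
      (∀ p ∈ L, 1 ≤ p.1 ∧ p.1 < p.2 ∧ p.2 ≤ n) →
      applySeq L (Finset.Icc 1 k) = some S' →
      S' ⊆ Finset.Icc 1 n ∧ S'.card = k ∧
        ac7csum a (canonPairs k S') ≤ ac7csum a L := by
  intro L
  induction L with
  | nil =>
    intro S' _ happ
    have hS' : S' = Finset.Icc 1 k := by
      have : some (Finset.Icc 1 k) = some S' := happ
      exact (Option.some.inj this).symm
    subst hS'
    refine ⟨Finset.Icc_subset_Icc (le_refl _) hkn, by simp, ?_⟩
    have h0 : canonPairs k (Finset.Icc 1 k) = [] := by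
      unfold canonPairs
      rw [Finset.sdiff_self, Finset.sort_empty]
      rfl
    rw [h0]
  | cons p L ih =>
    intro S' hL happ
    have happ' : (applySeq L (Finset.Icc 1 k)).bind (fun S'' =>
        if p.1 ∈ S'' ∧ p.2 ∉ S'' then some (insert p.2 (S''.erase p.1)) else none) = some S' :=
      happ
    cases hA : applySeq L (Finset.Icc 1 k) with
    | none => rw [hA] at happ'; simp at happ'
    | some S'' =>
      rw [hA, Option.bind_some] at happ'
      by_cases hcond : p.1 ∈ S'' ∧ p.2 ∉ S''
      · rw [if_pos hcond] at happ'
        have hS' : S' = insert p.2 (S''.erase p.1) := (Option.some.inj happ').symm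
        obtain ⟨hsub, hcard, hle⟩ := ih S'' (fun q hq => hL q (List.mem_cons_of_mem p hq)) hA
        have hp := hL p (List.mem_cons_self)
        have hstep := ac7_step ha hb S'' hsub hcard hcond.1 hcond.2 hp.1 hp.2.1 hp.2.2
        subst hS'
        refine ⟨?_, ?_, ?_⟩
        · intro z hz
          rcases Finset.mem_insert.mp hz with rfl | hz2
          · rw [Finset.mem_Icc]; omega
          · exact hsub (Finset.mem_of_mem_erase hz2)
        · rw [Finset.card_insert_of_notMem (fun h => hcond.2 (Finset.mem_of_mem_erase h)),
            Finset.card_erase_of_mem hcond.1, hcard]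
          have : 1 ≤ k := by
            by_contra h
            have hk0 : k = 0 := by omega
            rw [hk0, Finset.card_eq_zero] at hcard
            rw [hcard] at hcond
            simp at hcond
          omega
        · simp only [ac7csum_cons]
          linarith
      · rw [if_neg hcond] at happ'
        simp at happ'

/-- Proposition (antichainmin): `s^A_{i_1,…,i_k} = a_{p_1,q_1} + … + a_{p_l,q_l}`:
the minimum of `Σ a_{x_m,y_m}` over all sequences of root vectors carrying
`e_{1,…,k}` to `± e_{i_1,…,i_k}` equals the sum over the antichain matching. -/
theorem stmt7 (n k : ℕ) (hn : 2 ≤ n) (a : ℕ → ℕ → ℤ)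
    (ha : ∀ i, 1 ≤ i → i + 2 ≤ n → a i (i+1) + a (i+1) (i+2) ≥ a i (i+2))
    (hb : ∀ i j, 1 ≤ i → i + 1 < j → j + 1 ≤ n →
      a i j + a (i+1) (j+1) ≥ a i (j+1) + a (i+1) j)
    (hk : 1 ≤ k) (hkn : k ≤ n)
    (I : Finset ℕ) (hI : I ⊆ Finset.Icc 1 n) (hcard : I.card = k) :
    IsLeast {v : ℤ | ∃ L : List (ℕ × ℕ),
        (∀ p ∈ L, 1 ≤ p.1 ∧ p.1 < p.2 ∧ p.2 ≤ n) ∧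
        applySeq L (Finset.Icc 1 k) = some I ∧
        v = (L.map fun p => a p.1 p.2).sum}
      ((canonPairs k I).map fun pq => a pq.1 pq.2).sum := by
  constructor
  · -- membership
    refine ⟨canonPairs k I, ?_, ?_, rfl⟩
    · intro pq hpq
      obtain ⟨u, v⟩ := pq
      have hmem : (u, v) ∈ ((Finset.Icc 1 k \ I).sort (· ≤ ·)).zip
          (((I \ Finset.Icc 1 k).sort (· ≤ ·)).reverse) := hpq
      have hu := (Finset.mem_sort _).1 (List.of_mem_zip hmem).1
      have hv := (Finset.mem_sort _).1 (List.mem_reverse.1 (List.of_mem_zip hmem).2)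
      have hu' := Finset.mem_Icc.mp (Finset.mem_sdiff.mp hu).1
      have hv' := ac7_memB hI hv
      exact ⟨hu'.1, by omega, hv'.2⟩
    · exact ac7_canon_applySeq hkn _ I rfl hI hcard
  · -- lower bound
    rintro v ⟨L, hL, happ, rfl⟩
    exact (ac7_lb ha hb hkn L I hL happ).2.2
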